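/- Fix $\alpha \le 1/4$ and set $\delta_\alpha = (\sqrt{1-4\alpha}-1)/2$. The function $u_\alpha(t) = t^{1/2}|\log t|^{-\delta_\alpha}$ on $(0,1)$ satisfies $-u_\alpha''(t) - \frac{1}{4}t^{-2}u_\alpha(t) = \alpha t^{-2}|\log t|^{-2} u_\alpha(t)$ for every $t \in (0,1)$. Moreover, for any $\gamma \le 1$ and $R \in (0,1)$, $u_\alpha \in L^2((0,R); t^{-2}|\log t|^{-2\gamma}\,dt)$ if and only if $\alpha < \frac{1}{4} - (1-\gamma)^2$. -/

import Mathlib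

open MeasureTheory Set

/-- Derivative of `x ↦ x^p * (-log x)^q` on `(0,1)`. -/
lemma key_hasDerivAt (p q : ℝ) {x : ℝ} (hx : x ∈ Ioo (0:ℝ) 1) :
    HasDerivAt (fun y : ℝ => y ^ p * (-Real.log y) ^ q)
      (p * x ^ (p - 1) * (-Real.log x) ^ q
        - q * x ^ (p - 1) * (-Real.log x) ^ (q - 1)) x := by
  obtain ⟨hx0, hx1⟩ := hx
  have hL : 0 < -Real.log x := by
    have := Real.log_neg hx0 hx1; linarith
  have h1 : HasDerivAt (fun y : ℝ => y ^ p) (p * x ^ (p - 1)) x :=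
    Real.hasDerivAt_rpow_const (Or.inl hx0.ne')
  have hlog : HasDerivAt (fun y : ℝ => -Real.log y) (-x⁻¹) x :=
    (Real.hasDerivAt_log hx0.ne').neg
  have houter : HasDerivAt (fun z : ℝ => z ^ q) (q * (-Real.log x) ^ (q - 1)) (-Real.log x) :=
    Real.hasDerivAt_rpow_const (Or.inl hL.ne')
  have h2 : HasDerivAt (fun y : ℝ => (-Real.log y) ^ q)
      (q * (-Real.log x) ^ (q - 1) * -x⁻¹) x := by have := houter.comp x hlog; exact this
  have h3 := h1.mul h2
  refine h3.congr_deriv (Eq.symm ?_)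
  have hxp : x ^ p * x⁻¹ = x ^ (p - 1) := by
    rw [← Real.rpow_neg_one x, ← Real.rpow_add hx0]; ring_nf
  linear_combination (q * (-Real.log x) ^ (q - 1)) * hxp

/-- One-dimensional sharpness example: `u_α(t) = t^{1/2} |log t|^{-δ_α}` solves the
critical Hardy–Leray equation on `(0,1)`, and its weighted integrability on `(0,R)`
holds precisely for `α < 1/4 - (1-γ)²`. -/
theorem one_dim_sharpness (α : ℝ) (hα : α ≤ 1 / 4)
    (δ : ℝ) (hδ : δ = (Real.sqrt (1 - 4 * α) - 1) / 2)
    (u : ℝ → ℝ) (hu : ∀ t, u t = t ^ ((1 : ℝ) / 2) * (-Real.log t) ^ (-δ)) :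
    (∀ t ∈ Ioo (0 : ℝ) 1,
      -(deriv (deriv u) t) - (1 / 4) * (t ^ 2)⁻¹ * u t =
        α * (t ^ 2)⁻¹ * ((Real.log t) ^ 2)⁻¹ * u t) ∧
    (∀ γ ≤ (1 : ℝ), ∀ R : ℝ, 0 < R → R < 1 →
      (Integrable (fun t => (t ^ 2)⁻¹ * |Real.log t| ^ (-2 * γ) * (u t) ^ 2)
          (volume.restrict (Ioo 0 R)) ↔
        α < 1 / 4 - (1 - γ) ^ 2)) := by
  have hufun : u = fun y : ℝ => y ^ ((1:ℝ)/2) * (-Real.log y) ^ (-δ) := funext hu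
  have hsq : Real.sqrt (1 - 4 * α) ^ 2 = 1 - 4 * α :=
    Real.sq_sqrt (by linarith)
  have hid : δ ^ 2 + δ = -α := by
    rw [hδ]; nlinarith [hsq]
  have hsnn : 0 ≤ Real.sqrt (1 - 4 * α) := Real.sqrt_nonneg _
  -- the first derivative agrees with `w` on (0,1)
  set w : ℝ → ℝ := fun x =>
      (1/2) * (x ^ (-(1:ℝ)/2) * (-Real.log x) ^ (-δ))
      + δ * (x ^ (-(1:ℝ)/2) * (-Real.log x) ^ (-δ - 1)) with hw_def
  have hu' : ∀ x ∈ Ioo (0:ℝ) 1, deriv u x = w x := by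
    intro x hx
    have h := key_hasDerivAt (1/2) (-δ) hx
    rw [hufun, h.deriv, hw_def]
    rw [show (1:ℝ)/2 - 1 = -(1:ℝ)/2 by norm_num]
    ring
  constructor
  · intro t ht
    have h0 : (0:ℝ) < t := ht.1
    have hL : 0 < -Real.log t := by
      have := Real.log_neg ht.1 ht.2; linarith
    -- second derivative
    have hev : deriv u =ᶠ[nhds t] w :=
      Filter.eventuallyEq_of_mem (isOpen_Ioo.mem_nhds ht) hu'
    have hw1 : HasDerivAt w
        ((1/2) * ((-(1:ℝ)/2) * t ^ (-(1:ℝ)/2 - 1) * (-Real.log t) ^ (-δ)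
            - (-δ) * t ^ (-(1:ℝ)/2 - 1) * (-Real.log t) ^ (-δ - 1))
          + δ * ((-(1:ℝ)/2) * t ^ (-(1:ℝ)/2 - 1) * (-Real.log t) ^ (-δ - 1)
            - (-δ - 1) * t ^ (-(1:ℝ)/2 - 1) * (-Real.log t) ^ (-δ - 1 - 1))) t :=
      ((key_hasDerivAt (-(1:ℝ)/2) (-δ) ht).const_mul (1/2)).add
        ((key_hasDerivAt (-(1:ℝ)/2) (-δ - 1) ht).const_mul δ)
    have hdd : deriv (deriv u) t =
        -(1/4) * (t ^ (-(3:ℝ)/2) * (-Real.log t) ^ (-δ))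
          + (δ ^ 2 + δ) * (t ^ (-(3:ℝ)/2) * (-Real.log t) ^ (-δ - 2)) := by
      rw [hev.deriv_eq, hw1.deriv,
        show -(1:ℝ)/2 - 1 = -(3:ℝ)/2 by norm_num,
        show -δ - 1 - 1 = -δ - 2 by ring]
      ring
    have e1 : ((t:ℝ) ^ 2)⁻¹ = t ^ (-2:ℝ) := by
      rw [show ((t:ℝ) ^ 2) = t ^ ((2:ℕ):ℝ) by rw [Real.rpow_natCast],
        ← Real.rpow_neg h0.le]
      norm_num
    have e2 : ((Real.log t) ^ 2)⁻¹ = (-Real.log t) ^ (-2:ℝ) := by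
      rw [show (Real.log t) ^ 2 = (-Real.log t) ^ ((2:ℕ):ℝ) by
          rw [Real.rpow_natCast]; ring,
        ← Real.rpow_neg hL.le]
      norm_num
    have hC : t ^ (-2:ℝ) * t ^ ((1:ℝ)/2) = t ^ (-(3:ℝ)/2) := by
      rw [← Real.rpow_add h0]; norm_num
    have hD : (-Real.log t) ^ (-2:ℝ) * (-Real.log t) ^ (-δ) = (-Real.log t) ^ (-δ - 2) := by
      rw [← Real.rpow_add hL]; ring_nf
    rw [hu t, hdd, e1, e2]
    linear_combination
      (-(1/4) * (-Real.log t) ^ (-δ) - α * (-Real.log t) ^ (-2:ℝ) * (-Real.log t) ^ (-δ)) * hC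
      + (-(α * t ^ (-(3:ℝ)/2))) * hD
      + (-(t ^ (-(3:ℝ)/2) * (-Real.log t) ^ (-δ - 2))) * hid
  · intro γ hγ R hR0 hR1
    set g : ℝ → ℝ := fun t => t⁻¹ * (-Real.log t) ^ (-(2*γ + 2*δ)) with hg_def
    have heq : EqOn (fun t => (t ^ 2)⁻¹ * |Real.log t| ^ (-2 * γ) * (u t) ^ 2) g (Ioo 0 R) := by
      intro t ht
      have h0 : (0:ℝ) < t := ht.1
      have ht1 : t < 1 := ht.2.trans hR1
      have hlt : Real.log t < 0 := Real.log_neg h0 ht1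
      have hL : 0 < -Real.log t := by linarith
      simp only [hu t, abs_of_neg hlt, mul_pow]
      have e1 : (t ^ ((1:ℝ)/2)) ^ 2 = t := by
        rw [← Real.rpow_natCast (t ^ ((1:ℝ)/2)) 2, ← Real.rpow_mul h0.le]
        norm_num
      have e2 : ((-Real.log t) ^ (-δ)) ^ 2 = (-Real.log t) ^ (-(2*δ)) := by
        rw [← Real.rpow_natCast ((-Real.log t) ^ (-δ)) 2, ← Real.rpow_mul hL.le]
        norm_num; ring_nf
      have e3 : (-Real.log t) ^ (-2*γ) * (-Real.log t) ^ (-(2*δ))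
          = (-Real.log t) ^ (-(2*γ + 2*δ)) := by
        rw [← Real.rpow_add hL]; ring_nf
      simp only [e1, e2, hg_def]
      rw [← e3]
      field_simp
    set a : ℝ := -Real.log R with ha_def
    have ha : 0 < a := by
      have := Real.log_neg hR0 hR1; simp [ha_def]; linarith
    have hexpa : Real.exp (-a) = R := by
      rw [ha_def, neg_neg, Real.exp_log hR0]
    have himage : (fun x => Real.exp (-x)) '' Ioi a = Ioo 0 R := by
      ext y
      constructor
      · rintro ⟨x, hx, rfl⟩
        exact ⟨Real.exp_pos _, by
          rw [← hexpa]; exact Real.exp_lt_exp.2 (by simpa using hx)⟩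
      · rintro ⟨hy0, hyR⟩
        refine ⟨-Real.log y, ?_, by simp [Real.exp_log hy0]⟩
        have : Real.log y < Real.log R := Real.log_lt_log hy0 hyR
        simp only [mem_Ioi, ha_def]; linarith
    have hf' : ∀ x ∈ Ioi a, HasDerivWithinAt (fun x => Real.exp (-x))
        (Real.exp (-x) * (-1)) (Ioi a) x := by
      intro x _
      exact ((Real.hasDerivAt_exp (-x)).comp x (hasDerivAt_neg x)).hasDerivWithinAt
    have hinj : InjOn (fun x => Real.exp (-x)) (Ioi a) := by
      intro x _ y _ h
      have := Real.exp_injective h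
      linarith [neg_injective this]
    have hmain := integrableOn_image_iff_integrableOn_abs_deriv_smul
      measurableSet_Ioi hf' hinj g
    rw [himage] at hmain
    have hfun : (fun x => |Real.exp (-x) * (-1)| • g (Real.exp (-x)))
        = fun x => x ^ (-(2*γ + 2*δ)) := by
      funext x
      simp only [hg_def, smul_eq_mul, mul_neg_one, abs_neg, abs_of_pos (Real.exp_pos _),
        Real.log_exp, neg_neg]
      rw [← mul_assoc, mul_inv_cancel₀ (Real.exp_ne_zero _), one_mul]
    rw [hfun] at hmain
    have hiff := (integrableOn_Ioi_rpow_iff ha (s := -(2*γ + 2*δ)))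
    have harith : (-(2*γ + 2*δ) < -1) ↔ (α < 1/4 - (1 - γ)^2) := by
      constructor
      · intro h
        nlinarith [hsq, hsnn, hδ]
      · intro h
        nlinarith [hsq, hsnn, hδ, sq_nonneg (Real.sqrt (1-4*α) - 2*(1-γ))]
    exact ((integrableOn_congr_fun heq measurableSet_Ioo).trans
      (hmain.trans hiff)).trans harith
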